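/- PCKV-GRR satisfies ε-local differential privacy with ε = ln((e^{ε₁+ε₂} + λ)/(min{e^{ε₁}, (e^{ε₂}+1)/2} + λ)), where λ = (ℓ−1)(e^{ε₂}+1)/2: for any two nonempty key-value sets S₁, S₂ and every output pair y' = ⟨k', v'⟩ with k' ∈ {1,…,d'} and v' ∈ {1, −1}, P(y' | S₁) ≤ e^{ε} · P(y' | S₂). -/

import Mathlib

open Finset

/-- Probability that PCKV-GRR outputs the pair `⟨k', v'⟩` (with
`v' ∈ {1, −1}`) given that key `k` with value `vk ∈ [−1,1]` was sampled:
it outputs `⟨k, 1⟩` with probability `a(1+(2p−1)vk)/2`, `⟨k, −1⟩` with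
probability `a(1−(2p−1)vk)/2`, and each pair with a different key with
probability `b/2`. -/
noncomputable def grrCondProb (d ℓ : ℕ) (a b p : ℝ) (k : Fin (d + ℓ))
    (vk : ℝ) (y : Fin (d + ℓ) × ℤ) : ℝ :=
  if y.1 = k then
    (if y.2 = 1 then a * (1 + (2*p - 1) * vk) / 2
     else a * (1 - (2*p - 1) * vk) / 2)
  else b / 2

/-- Total probability `P(y | S)` that PCKV-GRR outputs the pair `y` on the
key-value set `S` (key set `K` with values `v`): with probability
`η = |K|/max{|K|, ℓ}` a key is sampled uniformly from `K` (with its value),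
and with probability `1 − η` a dummy key is sampled uniformly from
`{d+1, …, d+ℓ}` (with value `0`). -/
noncomputable def grrOutProb (d ℓ : ℕ) (a b p : ℝ) (K : Finset (Fin (d + ℓ)))
    (v : Fin (d + ℓ) → ℝ) (y : Fin (d + ℓ) × ℤ) : ℝ :=
  ((K.card : ℝ) / max (K.card : ℝ) (ℓ : ℝ)) / (K.card : ℝ) *
      ∑ k ∈ K, grrCondProb d ℓ a b p k (v k) y
    + (1 - (K.card : ℝ) / max (K.card : ℝ) (ℓ : ℝ)) / (ℓ : ℝ) *
      ∑ k ∈ univ.filter (fun k : Fin (d + ℓ) => d ≤ (k : ℕ)),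
        grrCondProb d ℓ a b p k 0 y

lemma grr_sum_of_mem (d ℓ : ℕ) (a b p : ℝ) (F : Finset (Fin (d + ℓ)))
    (v : Fin (d + ℓ) → ℝ) (y : Fin (d + ℓ) × ℤ) (h : y.1 ∈ F) :
    ∑ k ∈ F, grrCondProb d ℓ a b p k (v k) y
      = grrCondProb d ℓ a b p y.1 (v y.1) y + ((F.card : ℝ) - 1) * (b / 2) := by
  rw [← Finset.add_sum_erase F _ h]
  congr 1
  have hc : ∀ k ∈ F.erase y.1, grrCondProb d ℓ a b p k (v k) y = b / 2 := by
    intro k hk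
    have hne : y.1 ≠ k := fun he => (Finset.mem_erase.mp hk).1 he.symm
    simp [grrCondProb, hne]
  rw [Finset.sum_congr rfl hc, Finset.sum_const, Finset.card_erase_of_mem h,
    nsmul_eq_mul]
  have h1 : 1 ≤ F.card := Finset.card_pos.mpr ⟨y.1, h⟩
  push_cast [Nat.cast_sub h1]
  ring

lemma grr_sum_of_not_mem (d ℓ : ℕ) (a b p : ℝ) (F : Finset (Fin (d + ℓ)))
    (v : Fin (d + ℓ) → ℝ) (y : Fin (d + ℓ) × ℤ) (h : y.1 ∉ F) :
    ∑ k ∈ F, grrCondProb d ℓ a b p k (v k) y = (F.card : ℝ) * (b / 2) := by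
  have hc : ∀ k ∈ F, grrCondProb d ℓ a b p k (v k) y = b / 2 := by
    intro k hk
    have hne : y.1 ≠ k := fun he => h (he ▸ hk)
    simp [grrCondProb, hne]
  rw [Finset.sum_congr rfl hc, Finset.sum_const, nsmul_eq_mul]

lemma grr_dsum_of_mem (d ℓ : ℕ) (a b p : ℝ) (F : Finset (Fin (d + ℓ)))
    (y : Fin (d + ℓ) × ℤ) (h : y.1 ∈ F) :
    ∑ k ∈ F, grrCondProb d ℓ a b p k 0 y
      = grrCondProb d ℓ a b p y.1 0 y + ((F.card : ℝ) - 1) * (b / 2) :=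
  grr_sum_of_mem d ℓ a b p F (fun _ => 0) y h

lemma grr_dsum_of_not_mem (d ℓ : ℕ) (a b p : ℝ) (F : Finset (Fin (d + ℓ)))
    (y : Fin (d + ℓ) × ℤ) (h : y.1 ∉ F) :
    ∑ k ∈ F, grrCondProb d ℓ a b p k 0 y = (F.card : ℝ) * (b / 2) :=
  grr_sum_of_not_mem d ℓ a b p F (fun _ => 0) y h

lemma grr_card_dummy (d ℓ : ℕ) :
    ((univ : Finset (Fin (d + ℓ))).filter fun k : Fin (d + ℓ) => d ≤ (k : ℕ)).card = ℓ := by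
  have h : ((univ : Finset (Fin (d + ℓ))).filter fun k : Fin (d + ℓ) => d ≤ (k : ℕ)) =
      Finset.map (Fin.natAddEmb d) univ := by
    ext k
    simp only [mem_filter, mem_univ, true_and, Finset.mem_map, Fin.natAddEmb,
      Function.Embedding.coeFn_mk]
    constructor
    · intro hk
      refine ⟨⟨k.1 - d, by have := k.isLt; omega⟩, ?_⟩
      exact Fin.ext (by show d + (k.1 - d) = k.1; omega)
    · rintro ⟨i, rfl⟩; show d ≤ d + (i : ℕ); omega
  rw [h, card_map, card_univ, Fintype.card_fin]

set_option maxHeartbeats 2000000 in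
lemma grr_bounds (d ℓ : ℕ) (hd : 1 ≤ d) (hℓ : 1 ≤ ℓ)
    (ε₁ ε₂ : ℝ) (hε₁ : 0 ≤ ε₁) (hε₂ : 0 ≤ ε₂)
    (a b p lam : ℝ)
    (ha : a = Real.exp ε₁ / (Real.exp ε₁ + ((d + ℓ : ℕ) : ℝ) - 1))
    (hb : b = 1 / (Real.exp ε₁ + ((d + ℓ : ℕ) : ℝ) - 1))
    (hp : p = Real.exp ε₂ / (Real.exp ε₂ + 1))
    (hlam : lam = ((ℓ : ℝ) - 1) * (Real.exp ε₂ + 1) / 2)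
    (K : Finset (Fin (d + ℓ))) (hK : K.Nonempty)
    (hKd : ∀ i ∈ K, (i : ℕ) < d)
    (v : Fin (d + ℓ) → ℝ) (hv : ∀ i ∈ K, v i ∈ Set.Icc (-1 : ℝ) 1)
    (y : Fin (d + ℓ) × ℤ) (hy : y.2 = 1 ∨ y.2 = -1) :
    b * (min (Real.exp ε₁) ((Real.exp ε₂ + 1) / 2) + lam)
        ≤ (ℓ : ℝ) * (Real.exp ε₂ + 1) * grrOutProb d ℓ a b p K v y ∧
      (ℓ : ℝ) * (Real.exp ε₂ + 1) * grrOutProb d ℓ a b p K v y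
        ≤ b * (Real.exp ε₁ * Real.exp ε₂ + lam) := by
  subst hlam
  have hE1 : 1 ≤ Real.exp ε₁ := Real.one_le_exp hε₁
  have hE2 : 1 ≤ Real.exp ε₂ := Real.one_le_exp hε₂
  have hdl : (2 : ℝ) ≤ ((d + ℓ : ℕ) : ℝ) := by exact_mod_cast Nat.add_le_add hd hℓ
  have hD : 0 < Real.exp ε₁ + ((d + ℓ : ℕ) : ℝ) - 1 := by linarith
  have hb0 : 0 < b := by rw [hb]; exact div_pos one_pos hD
  have hab : a = Real.exp ε₁ * b := by rw [ha, hb]; ring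
  have hW : (0 : ℝ) < Real.exp ε₂ + 1 := by linarith
  have hN1 : (1 : ℝ) ≤ (K.card : ℝ) := by exact_mod_cast Finset.card_pos.mpr hK
  have hN0 : (0 : ℝ) < (K.card : ℝ) := by linarith
  have hLr1 : (1 : ℝ) ≤ (ℓ : ℝ) := by exact_mod_cast hℓ
  have hLr0 : (0 : ℝ) < (ℓ : ℝ) := by linarith
  have hm1 : min (Real.exp ε₁) ((Real.exp ε₂ + 1) / 2) ≤ Real.exp ε₁ := min_le_left _ _
  have hm2 : min (Real.exp ε₁) ((Real.exp ε₂ + 1) / 2) ≤ (Real.exp ε₂ + 1) / 2 :=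
    min_le_right _ _
  have hm0 : (0 : ℝ) < min (Real.exp ε₁) ((Real.exp ε₂ + 1) / 2) :=
    lt_min (by linarith) (by linarith)
  simp only [grrOutProb]
  by_cases hmem : y.1 ∈ K
  · -- output key is a real key of K
    have hyd : (y.1 : ℕ) < d := hKd _ hmem
    have hnd : y.1 ∉ (univ : Finset (Fin (d + ℓ))).filter
        (fun k : Fin (d + ℓ) => d ≤ (k : ℕ)) := by
      simp only [mem_filter, mem_univ, true_and]; omega
    rw [grr_sum_of_mem d ℓ a b p K v y hmem, grr_dsum_of_not_mem d ℓ a b p _ y hnd,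
      grr_card_dummy d ℓ]
    obtain ⟨hvl, hvr⟩ := hv y.1 hmem
    have e2 : (0 : ℝ) ≤ Real.exp ε₂ - 1 := by linarith
    have eb : (0 : ℝ) ≤ Real.exp ε₁ * b := by positivity
    have hQb : Real.exp ε₁ * b
          ≤ (Real.exp ε₂ + 1) * grrCondProb d ℓ a b p y.1 (v y.1) y ∧
        (Real.exp ε₂ + 1) * grrCondProb d ℓ a b p y.1 (v y.1) y
          ≤ Real.exp ε₁ * Real.exp ε₂ * b := by
      rcases hy with h | h
      · have hq : grrCondProb d ℓ a b p y.1 (v y.1) y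
            = a * (1 + (2*p - 1) * v y.1) / 2 := by simp [grrCondProb, h]
        have key : (Real.exp ε₂ + 1) * (a * (1 + (2*p - 1) * v y.1) / 2)
            = Real.exp ε₁ * b *
              ((Real.exp ε₂ + 1) + (Real.exp ε₂ - 1) * v y.1) / 2 := by
          rw [hab, hp]; field_simp; ring
        rw [hq, key]
        constructor
        · linarith [mul_nonneg (mul_nonneg eb e2) (by linarith : (0:ℝ) ≤ 1 + v y.1)]
        · linarith [mul_nonneg (mul_nonneg eb e2) (by linarith : (0:ℝ) ≤ 1 - v y.1)]
      · have hq : grrCondProb d ℓ a b p y.1 (v y.1) y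
            = a * (1 - (2*p - 1) * v y.1) / 2 := by simp [grrCondProb, h]
        have key : (Real.exp ε₂ + 1) * (a * (1 - (2*p - 1) * v y.1) / 2)
            = Real.exp ε₁ * b *
              ((Real.exp ε₂ + 1) - (Real.exp ε₂ - 1) * v y.1) / 2 := by
          rw [hab, hp]; field_simp; ring
        rw [hq, key]
        constructor
        · linarith [mul_nonneg (mul_nonneg eb e2) (by linarith : (0:ℝ) ≤ 1 - v y.1)]
        · linarith [mul_nonneg (mul_nonneg eb e2) (by linarith : (0:ℝ) ≤ 1 + v y.1)]
    obtain ⟨hQ1, hQ2⟩ := hQb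
    rcases le_or_gt K.card ℓ with hnl | hnl
    · have hmax : max ((K.card : ℝ)) ((ℓ : ℝ)) = (ℓ : ℝ) :=
        max_eq_right (by exact_mod_cast hnl)
      rw [hmax]
      have hP : (ℓ : ℝ) * (Real.exp ε₂ + 1) *
            (((K.card : ℝ) / (ℓ : ℝ)) / (K.card : ℝ) *
              (grrCondProb d ℓ a b p y.1 (v y.1) y + ((K.card : ℝ) - 1) * (b / 2))
            + (1 - (K.card : ℝ) / (ℓ : ℝ)) / (ℓ : ℝ) * ((ℓ : ℝ) * (b / 2)))
          = (Real.exp ε₂ + 1) * grrCondProb d ℓ a b p y.1 (v y.1) y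
            + (Real.exp ε₂ + 1) * ((ℓ : ℝ) - 1) * (b / 2) := by
        field_simp
        ring
      rw [hP]
      have hbm := mul_le_mul_of_nonneg_left hm1 hb0.le
      constructor
      · linarith
      · linarith
    · have hLrN : (ℓ : ℝ) ≤ (K.card : ℝ) := by exact_mod_cast hnl.le
      have hmax : max ((K.card : ℝ)) ((ℓ : ℝ)) = (K.card : ℝ) :=
        max_eq_left hLrN
      rw [hmax, div_self hN0.ne', sub_self, zero_div, zero_mul, add_zero,
        one_div, inv_mul_eq_div, ← mul_div_assoc]
      have hQ1L := mul_le_mul_of_nonneg_left hQ1 hLr0.le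
      have hQ2L := mul_le_mul_of_nonneg_left hQ2 hLr0.le
      constructor
      · rw [le_div_iff₀ hN0]
        rcases min_cases (Real.exp ε₁) ((Real.exp ε₂ + 1) / 2) with ⟨hmeq, hmle⟩ | ⟨hmeq, hmle⟩ <;>
          rw [hmeq]
        · have t1 : (0 : ℝ) ≤ ((K.card : ℝ) - (ℓ : ℝ)) *
              ((Real.exp ε₂ + 1) * b / 2 - Real.exp ε₁ * b) :=
            mul_nonneg (by linarith)
              (by linarith [mul_le_mul_of_nonneg_left hmle hb0.le])
          linarith [hQ1L, t1]
        · have t2 : (0 : ℝ) ≤ (ℓ : ℝ) * b * (Real.exp ε₁ - (Real.exp ε₂ + 1) / 2) :=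
            mul_nonneg (by positivity) (by linarith)
          linarith [hQ1L, t2]
      · rw [div_le_iff₀ hN0]
        have t3 : (0 : ℝ) ≤ ((K.card : ℝ) - (ℓ : ℝ)) * b *
            (Real.exp ε₁ * Real.exp ε₂ - (Real.exp ε₂ + 1) / 2) :=
          mul_nonneg (mul_nonneg (by linarith) hb0.le)
            (by linarith [le_mul_of_one_le_left (by linarith : (0:ℝ) ≤ Real.exp ε₂) hE1])
        linarith [hQ2L, t3]
  · rw [grr_sum_of_not_mem d ℓ a b p K v y hmem]
    by_cases hdum : d ≤ (y.1 : ℕ)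
    · have hmemD : y.1 ∈ (univ : Finset (Fin (d + ℓ))).filter
          (fun k : Fin (d + ℓ) => d ≤ (k : ℕ)) := by
        simp only [mem_filter, mem_univ, true_and]; exact hdum
      rw [grr_dsum_of_mem d ℓ a b p _ y hmemD, grr_card_dummy d ℓ]
      have hA : grrCondProb d ℓ a b p y.1 0 y = a / 2 := by
        rcases hy with h | h <;> simp [grrCondProb, h]
      rw [hA, hab]
      rcases le_or_gt K.card ℓ with hnl | hnl
      · have hmax : max ((K.card : ℝ)) ((ℓ : ℝ)) = (ℓ : ℝ) :=
          max_eq_right (by exact_mod_cast hnl)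
        rw [hmax]
        have hNL : (K.card : ℝ) ≤ (ℓ : ℝ) := by exact_mod_cast hnl
        have hP : (ℓ : ℝ) * (Real.exp ε₂ + 1) *
              (((K.card : ℝ) / (ℓ : ℝ)) / (K.card : ℝ) * ((K.card : ℝ) * (b / 2))
              + (1 - (K.card : ℝ) / (ℓ : ℝ)) / (ℓ : ℝ) *
                (Real.exp ε₁ * b / 2 + ((ℓ : ℝ) - 1) * (b / 2)))
            = ((Real.exp ε₂ + 1) * (K.card : ℝ) * (ℓ : ℝ) * (b / 2)
              + (Real.exp ε₂ + 1) * ((ℓ : ℝ) - (K.card : ℝ)) *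
                (Real.exp ε₁ * b / 2 + ((ℓ : ℝ) - 1) * (b / 2))) / (ℓ : ℝ) := by
          field_simp
        have h1 : (0 : ℝ) ≤ b * ((Real.exp ε₂ + 1) / 2
            - min (Real.exp ε₁) ((Real.exp ε₂ + 1) / 2)) :=
          mul_nonneg hb0.le (by linarith)
        have h2 : (0 : ℝ) ≤ b * (Real.exp ε₁ * (Real.exp ε₂ + 1) / 2
            - min (Real.exp ε₁) ((Real.exp ε₂ + 1) / 2)) :=
          mul_nonneg hb0.le
            (by nlinarith [hm1, hE1, hE2, hW])
        constructor
        · rw [hP, le_div_iff₀ hLr0]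
          linarith [mul_nonneg hN0.le h1, mul_nonneg (by linarith : (0:ℝ) ≤ (ℓ:ℝ) - (K.card:ℝ)) h2]
        · rw [hP, div_le_iff₀ hLr0]
          have u1 : (0 : ℝ) ≤ b * (Real.exp ε₁ * Real.exp ε₂ - (Real.exp ε₂ + 1) / 2) :=
            mul_nonneg hb0.le
              (by linarith [le_mul_of_one_le_left (by linarith : (0:ℝ) ≤ Real.exp ε₂) hE1])
          have u2 : (0 : ℝ) ≤ b * Real.exp ε₁ * (Real.exp ε₂ - (Real.exp ε₂ + 1) / 2) :=
            mul_nonneg (mul_nonneg hb0.le (by positivity)) (by linarith)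
          linarith [mul_nonneg hN0.le u1, mul_nonneg (by linarith : (0:ℝ) ≤ (ℓ:ℝ) - (K.card:ℝ)) u2]
      · have hLrN : (ℓ : ℝ) ≤ (K.card : ℝ) := by exact_mod_cast hnl.le
        have hmax : max ((K.card : ℝ)) ((ℓ : ℝ)) = (K.card : ℝ) := max_eq_left hLrN
        rw [hmax, div_self hN0.ne', sub_self, zero_div, zero_mul, add_zero,
          one_div, inv_mul_eq_div, mul_div_cancel_left₀ _ hN0.ne']
        constructor
        · linarith [mul_le_mul_of_nonneg_left hm2 hb0.le]
        · linarith [mul_nonneg hb0.le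
            (by linarith [le_mul_of_one_le_left (by linarith : (0:ℝ) ≤ Real.exp ε₂) hE1] :
              (0:ℝ) ≤ Real.exp ε₁ * Real.exp ε₂ - (Real.exp ε₂ + 1) / 2)]
    · have hndD : y.1 ∉ (univ : Finset (Fin (d + ℓ))).filter
          (fun k : Fin (d + ℓ) => d ≤ (k : ℕ)) := by
        simp only [mem_filter, mem_univ, true_and]; omega
      rw [grr_dsum_of_not_mem d ℓ a b p _ y hndD, grr_card_dummy d ℓ]
      have hM0 : (0 : ℝ) < max ((K.card : ℝ)) ((ℓ : ℝ)) :=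
        lt_of_lt_of_le hN0 (le_max_left _ _)
      have hP : (ℓ : ℝ) * (Real.exp ε₂ + 1) *
            (((K.card : ℝ) / max ((K.card : ℝ)) ((ℓ : ℝ))) / (K.card : ℝ) *
              ((K.card : ℝ) * (b / 2))
            + (1 - (K.card : ℝ) / max ((K.card : ℝ)) ((ℓ : ℝ))) / (ℓ : ℝ) *
              ((ℓ : ℝ) * (b / 2)))
          = (ℓ : ℝ) * (Real.exp ε₂ + 1) * (b / 2) := by
        field_simp
        ring
      rw [hP]
      constructor
      · linarith [mul_le_mul_of_nonneg_left hm2 hb0.le]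
      · linarith [mul_nonneg hb0.le
            (by linarith [le_mul_of_one_le_left (by linarith : (0:ℝ) ≤ Real.exp ε₂) hE1] :
              (0:ℝ) ≤ Real.exp ε₁ * Real.exp ε₂ - (Real.exp ε₂ + 1) / 2)]


/-- **Budget composition of PCKV-GRR.** With perturbation probabilities
`a = e^{ε₁}/(e^{ε₁}+d'−1)`, `b = 1/(e^{ε₁}+d'−1)`, `p = e^{ε₂}/(e^{ε₂}+1)`
(where `d' = d + ℓ` and `ε₁, ε₂ ≥ 0`), PCKV-GRR satisfies `ε`-LDP with
`ε = ln((e^{ε₁+ε₂} + λ)/(min{e^{ε₁}, (e^{ε₂}+1)/2} + λ))` and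
`λ = (ℓ−1)(e^{ε₂}+1)/2`: for any two nonempty key-value sets and any output
pair `y = ⟨k', v'⟩` with `v' ∈ {1, −1}`, `P(y | S₁) ≤ e^ε · P(y | S₂)`. -/
theorem pckv_grr_ldp (d ℓ : ℕ) (hd : 1 ≤ d) (hℓ : 1 ≤ ℓ)
    (ε₁ ε₂ : ℝ) (hε₁ : 0 ≤ ε₁) (hε₂ : 0 ≤ ε₂)
    (a b p lam : ℝ)
    (ha : a = Real.exp ε₁ / (Real.exp ε₁ + ((d + ℓ : ℕ) : ℝ) - 1))
    (hb : b = 1 / (Real.exp ε₁ + ((d + ℓ : ℕ) : ℝ) - 1))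
    (hp : p = Real.exp ε₂ / (Real.exp ε₂ + 1))
    (hlam : lam = ((ℓ : ℝ) - 1) * (Real.exp ε₂ + 1) / 2)
    (K₁ K₂ : Finset (Fin (d + ℓ))) (hK₁ : K₁.Nonempty) (hK₂ : K₂.Nonempty)
    (hK₁d : ∀ i ∈ K₁, (i : ℕ) < d) (hK₂d : ∀ i ∈ K₂, (i : ℕ) < d)
    (v₁ v₂ : Fin (d + ℓ) → ℝ)
    (hv₁ : ∀ i ∈ K₁, v₁ i ∈ Set.Icc (-1 : ℝ) 1)
    (hv₂ : ∀ i ∈ K₂, v₂ i ∈ Set.Icc (-1 : ℝ) 1)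
    (y : Fin (d + ℓ) × ℤ) (hy : y.2 = 1 ∨ y.2 = -1) :
    grrOutProb d ℓ a b p K₁ v₁ y
      ≤ Real.exp (Real.log ((Real.exp (ε₁ + ε₂) + lam) /
            (min (Real.exp ε₁) ((Real.exp ε₂ + 1) / 2) + lam))) *
        grrOutProb d ℓ a b p K₂ v₂ y := by
  have hE1 : 1 ≤ Real.exp ε₁ := Real.one_le_exp hε₁
  have hE2 : 1 ≤ Real.exp ε₂ := Real.one_le_exp hε₂
  have hLr1 : (1 : ℝ) ≤ (ℓ : ℝ) := by exact_mod_cast hℓ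
  have hlam0 : 0 ≤ lam := by
    rw [hlam]
    have := mul_nonneg (by linarith : (0:ℝ) ≤ (ℓ:ℝ) - 1)
      (by linarith : (0:ℝ) ≤ Real.exp ε₂ + 1)
    linarith
  have hm0 : 0 < min (Real.exp ε₁) ((Real.exp ε₂ + 1) / 2) :=
    lt_min (Real.exp_pos _) (by linarith)
  have hnum : 0 < Real.exp (ε₁ + ε₂) + lam := by linarith [Real.exp_pos (ε₁ + ε₂)]
  have hden : 0 < min (Real.exp ε₁) ((Real.exp ε₂ + 1) / 2) + lam := by linarith
  rw [Real.exp_log (div_pos hnum hden)]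
  obtain ⟨_, h1u⟩ := grr_bounds d ℓ hd hℓ ε₁ ε₂ hε₁ hε₂ a b p lam ha hb hp hlam
    K₁ hK₁ hK₁d v₁ hv₁ y hy
  obtain ⟨h2l, _⟩ := grr_bounds d ℓ hd hℓ ε₁ ε₂ hε₁ hε₂ a b p lam ha hb hp hlam
    K₂ hK₂ hK₂d v₂ hv₂ y hy
  have hLW : (0 : ℝ) < (ℓ : ℝ) * (Real.exp ε₂ + 1) :=
    mul_pos (by linarith) (by linarith)
  rw [div_mul_eq_mul_div, le_div_iff₀ hden]
  have t1 := mul_le_mul_of_nonneg_right h1u hden.le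
  have t2 := mul_le_mul_of_nonneg_left h2l hnum.le
  have key : ((ℓ : ℝ) * (Real.exp ε₂ + 1)) *
        (grrOutProb d ℓ a b p K₁ v₁ y *
          (min (Real.exp ε₁) ((Real.exp ε₂ + 1) / 2) + lam))
      ≤ ((ℓ : ℝ) * (Real.exp ε₂ + 1)) *
        ((Real.exp (ε₁ + ε₂) + lam) * grrOutProb d ℓ a b p K₂ v₂ y) := by
    rw [Real.exp_add] at t2 ⊢
    linarith [t1, t2]
  exact le_of_mul_le_mul_left key hLW
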